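/- There exists a family 𝔉 of subsets of ℕ with |𝔉| = 2^ℵ₀ such that any two distinct members of 𝔉 are not coarsely equivalent as subsets of ℕ with the metric d(x,y) = |x − y|. -/

import Mathlib

/-- `Y` is a large subset of `X ⊆ ℕ` with respect to the metric `|x - y|`. -/
def NatLargeIn (Y X : Set ℕ) : Prop :=
  Y ⊆ X ∧ ∃ r : ℕ, ∀ x ∈ X, ∃ y ∈ Y, Nat.dist x y ≤ r

/-- A bijection `f : X ≃ X'` between subsets of `ℕ` (with the metric `|x - y|`)
is an asymorphism if it is coarse in both directions. -/
def NatIsAsymorphism (X X' : Set ℕ) (f : X ≃ X') : Prop :=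
  (∀ r : ℕ, ∃ t : ℕ, ∀ x y : X,
      Nat.dist (x : ℕ) (y : ℕ) ≤ r → Nat.dist (f x : ℕ) (f y : ℕ) ≤ t) ∧
  (∀ r : ℕ, ∃ t : ℕ, ∀ x y : X',
      Nat.dist (x : ℕ) (y : ℕ) ≤ r → Nat.dist (f.symm x : ℕ) (f.symm y : ℕ) ≤ t)

/-- Subsets `X, X'` of `ℕ` are coarsely equivalent if some large subsets of each
are asymorphic. -/
def NatCoarselyEquiv (X X' : Set ℕ) : Prop :=
  ∃ Y Y' : Set ℕ, NatLargeIn Y X ∧ NatLargeIn Y' X' ∧ ∃ f : Y ≃ Y', NatIsAsymorphism Y Y' f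

namespace CoarseAux
open Classical

/-- Block length. -/
def L (n : ℕ) : ℕ := 2 ^ 2 ^ n
/-- Block position. -/
def c (n : ℕ) : ℕ := 2 ^ (3 * 2 ^ n)
/-- The `n`-th block. -/
def blk (n : ℕ) : Set ℕ := {x | c n ≤ x ∧ x < c n + L n}
/-- The set encoded by `S`. -/
def XS (S : Set ℕ) : Set ℕ := {x | ∃ n ∈ S, x ∈ blk n}

lemma L_pos (n : ℕ) : 0 < L n := pow_pos (by norm_num) _
lemma c_pos (n : ℕ) : 0 < c n := pow_pos (by norm_num) _

lemma L_le_c (n : ℕ) : L n ≤ c n :=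
  Nat.pow_le_pow_right (by norm_num) (by nlinarith [pow_pos (show 0 < 2 by norm_num) n])

lemma L_mono {m n : ℕ} (h : m < n) : L m < L n :=
  Nat.pow_lt_pow_right (by norm_num) (Nat.pow_lt_pow_right (by norm_num) h)

lemma c_mono {m n : ℕ} (h : m < n) : c m < c n :=
  Nat.pow_lt_pow_right (by norm_num) (by
    have := Nat.pow_lt_pow_right (show 1 < 2 by norm_num) h
    omega)

lemma L_sq (n : ℕ) : L (n + 1) = L n * L n := by
  unfold L
  rw [← pow_add]
  congr 1
  rw [pow_succ]
  ring

lemma L_mul_le {m n : ℕ} (h : m < n) : L m * L m ≤ L n := by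
  rw [← L_sq]
  rcases Nat.eq_or_lt_of_le (Nat.succ_le_of_lt h) with h' | h'
  · exact le_of_eq (congrArg L h')
  · exact le_of_lt (L_mono h')

lemma four_c {m n : ℕ} (h : m < n) : 4 * c m ≤ c n := by
  unfold c
  have h1 : 3 * 2 ^ m + 2 ≤ 3 * 2 ^ n := by
    have h2 : 2 ^ (m+1) ≤ 2 ^ n := Nat.pow_le_pow_right (by norm_num) h
    have h3 : (1:ℕ) ≤ 2 ^ m := Nat.one_le_two_pow
    rw [pow_succ] at h2
    omega
  calc 4 * 2 ^ (3 * 2 ^ m) = 2 ^ (3 * 2 ^ m + 2) := by rw [pow_add]; ring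
  _ ≤ 2 ^ (3 * 2 ^ n) := Nat.pow_le_pow_right (by norm_num) h1

lemma lt_L (n : ℕ) : n < L n := by
  calc n < 2 ^ n := Nat.lt_two_pow_self (n := n)
  _ ≤ 2 ^ 2 ^ n := Nat.pow_le_pow_right (by norm_num) (Nat.le_of_lt (Nat.lt_two_pow_self (n := n)))

lemma lt_c (n : ℕ) : n < c n := lt_of_lt_of_le (lt_L n) (L_le_c n)

lemma blk_ub {n x : ℕ} (hx : x ∈ blk n) : x < 2 * c n := by
  have := L_le_c n
  rcases hx with ⟨h1, h2⟩
  omega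

lemma blk_disjoint {m n x : ℕ} (hmn : m < n) (hm : x ∈ blk m) (hn : x ∈ blk n) : False := by
  have h4 := four_c hmn
  have h1 := blk_ub hm
  have h2 := hn.1
  have := c_pos m
  omega

lemma blk_eq {m n x : ℕ} (hm : x ∈ blk m) (hn : x ∈ blk n) : m = n := by
  rcases lt_trichotomy m n with h | h | h
  · exact absurd (blk_disjoint h hm hn) not_false
  · exact h
  · exact absurd (blk_disjoint h hn hm) not_false

lemma sep {m n x u : ℕ} (hmn : m < n) (hm : x ∈ blk m) (hn : u ∈ blk n) :
    c n ≤ 2 * Nat.dist x u := by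
  have h4 := four_c hmn
  have h1 := blk_ub hm
  have h2 := hn.1
  have hxu : x < u := by have := c_pos m; omega
  simp only [Nat.dist]
  omega

lemma sep' {m n x u : ℕ} (hmn : m ≠ n) (hm : x ∈ blk m) (hn : u ∈ blk n) :
    c m ≤ 2 * Nat.dist x u ∧ c n ≤ 2 * Nat.dist x u := by
  rcases lt_or_gt_of_ne hmn with h | h
  · have := sep h hm hn
    have := c_mono h
    omega
  · have h1 := sep h hn hm
    have h2 := c_mono h
    simp only [Nat.dist] at h1 ⊢
    omega


/-- Two points of `XS T` are related if they lie in the same block, or both lie in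
"small" blocks (blocks `k` with `c k ≤ 2 t`). -/
def Rel (T : Set ℕ) (t : ℕ) (u v : ℕ) : Prop :=
  ∃ k l, k ∈ T ∧ l ∈ T ∧ u ∈ blk k ∧ v ∈ blk l ∧ (k = l ∨ (c k ≤ 2 * t ∧ c l ≤ 2 * t))

lemma Rel.symm {T : Set ℕ} {t u v : ℕ} (h : Rel T t u v) : Rel T t v u := by
  obtain ⟨k, l, hk, hl, hu, hv, hh⟩ := h
  refine ⟨l, k, hl, hk, hv, hu, ?_⟩
  tauto

lemma Rel.trans {T : Set ℕ} {t u v w : ℕ} (h1 : Rel T t u v) (h2 : Rel T t v w) :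
    Rel T t u w := by
  obtain ⟨k, l, hk, hl, hu, hv, hh⟩ := h1
  obtain ⟨l', k', hl', hk', hv', hw, hh'⟩ := h2
  have hll : l = l' := blk_eq hv hv'
  subst hll
  refine ⟨k, k', hk, hk', hu, hw, ?_⟩
  rcases hh with rfl | hs
  · rcases hh' with rfl | hs'
    · exact Or.inl rfl
    · exact Or.inr hs'
  · rcases hh' with rfl | hs'
    · exact Or.inr ⟨hs.1, hs.2⟩
    · exact Or.inr ⟨hs.1, hs'.2⟩

lemma rel_of_dist {T : Set ℕ} {t u v : ℕ} (hu : u ∈ XS T) (hv : v ∈ XS T)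
    (hd : Nat.dist u v ≤ t) : Rel T t u v := by
  obtain ⟨k, hk, hbu⟩ := hu
  obtain ⟨l, hl, hbv⟩ := hv
  refine ⟨k, l, hk, hl, hbu, hbv, ?_⟩
  by_cases h : k = l
  · exact Or.inl h
  · right
    have := sep' h hbu hbv
    omega

/-- Chain connectivity: the image under a controlled map of the trace of a dense
subset on a big block is `Rel`-connected. -/
lemma chain {S T Y : Set ℕ} {g : ℕ → ℕ} {t r n : ℕ}
    (hY : Y ⊆ XS S)
    (hdense : ∀ x ∈ XS S, ∃ y ∈ Y, Nat.dist x y ≤ r)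
    (hg : ∀ x ∈ Y, g x ∈ XS T)
    (hctrl : ∀ x y, x ∈ Y → y ∈ Y → Nat.dist x y ≤ 2 * r + 1 → Nat.dist (g x) (g y) ≤ t)
    (hn : n ∈ S) (hrn : 2 * r < c n) :
    ∀ y z, y ∈ Y → y ∈ blk n → z ∈ Y → z ∈ blk n → Rel T t (g y) (g z) := by
  have key : ∀ d y z, y ∈ Y → y ∈ blk n → z ∈ Y → z ∈ blk n → y ≤ z → z - y = d →
      Rel T t (g y) (g z) := by
    intro d
    induction d using Nat.strong_induction_on with
    | _ d ih =>
      intro y z hy hby hz hbz hyz hd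
      by_cases hsmall : z - y ≤ 2 * r + 1
      · refine rel_of_dist (hg y hy) (hg z hz) (hctrl _ _ hy hz ?_)
        simp only [Nat.dist]
        omega
      · have hbp : y + r + 1 ∈ blk n := by
          constructor
          · have := hby.1; omega
          · have := hbz.2; omega
        obtain ⟨w, hw, hwd⟩ := hdense _ ⟨n, hn, hbp⟩
        obtain ⟨n', hn', hbw⟩ := hY hw
        have hnn : n' = n := by
          by_contra hne
          have h2 := (sep' hne hbw hbp).2
          simp only [Nat.dist] at hwd h2
          omega
        subst hnn
        have hyw : y < w ∧ w ≤ y + 2 * r + 1 := by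
          simp only [Nat.dist] at hwd
          omega
        have h1 : Rel T t (g y) (g w) := by
          refine rel_of_dist (hg y hy) (hg w hw) (hctrl _ _ hy hw ?_)
          simp only [Nat.dist]
          omega
        have h2 : Rel T t (g w) (g z) := by
          refine ih (z - w) (by omega) w z hw hbw hz hbz (by omega) rfl
        exact h1.trans h2
  intro y z hy hby hz hbz
  rcases le_total y z with h | h
  · exact key (z - y) y z hy hby hz hbz h rfl
  · exact (key (y - z) z y hz hbz hy hby h rfl).symm


open Classical in
/-- The trace of `Y` on the `n`-th block, as a finset. -/
noncomputable def trace (Y : Set ℕ) (n : ℕ) : Finset ℕ :=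
  (Finset.Ico (c n) (c n + L n)).filter (fun x => x ∈ Y)

lemma trace_mem {Y : Set ℕ} {n x : ℕ} : x ∈ trace Y n ↔ x ∈ blk n ∧ x ∈ Y := by
  unfold trace
  rw [Finset.mem_filter, Finset.mem_Ico]
  exact Iff.rfl

lemma trace_card_le (Y : Set ℕ) (n : ℕ) : (trace Y n).card ≤ L n := by
  calc (trace Y n).card ≤ (Finset.Ico (c n) (c n + L n)).card :=
        Finset.card_le_card (Finset.filter_subset _ _)
  _ = L n := by rw [Nat.card_Ico]; omega

lemma trace_lower {S Y : Set ℕ} {r n : ℕ} (hY : Y ⊆ XS S)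
    (hd : ∀ x ∈ XS S, ∃ y ∈ Y, Nat.dist x y ≤ r) (hn : n ∈ S) (hrn : 2 * r < c n) :
    L n ≤ (2 * r + 1) * (trace Y n).card := by
  have hsub : Finset.Ico (c n) (c n + L n) ⊆
      (trace Y n).biUnion (fun y => Finset.Icc (y - r) (y + r)) := by
    intro x hx
    rw [Finset.mem_Ico] at hx
    obtain ⟨y, hy, hyd⟩ := hd x ⟨n, hn, hx.1, hx.2⟩
    obtain ⟨n', hn', hbn'⟩ := hY hy
    have hnn : n' = n := by
      by_contra hne
      have h2 := (sep' hne hbn' ⟨hx.1, hx.2⟩).2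
      simp only [Nat.dist] at hyd h2
      omega
    subst hnn
    refine Finset.mem_biUnion.mpr ⟨y, trace_mem.mpr ⟨hbn', hy⟩, ?_⟩
    rw [Finset.mem_Icc]
    simp only [Nat.dist] at hyd
    omega
  calc L n = (Finset.Ico (c n) (c n + L n)).card := by rw [Nat.card_Ico]; omega
  _ ≤ ((trace Y n).biUnion (fun y => Finset.Icc (y - r) (y + r))).card :=
      Finset.card_le_card hsub
  _ ≤ ∑ y ∈ trace Y n, (Finset.Icc (y - r) (y + r)).card := Finset.card_biUnion_le
  _ ≤ ∑ _y ∈ trace Y n, (2 * r + 1) :=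
      Finset.sum_le_sum (fun y _ => by rw [Nat.card_Icc]; omega)
  _ = (trace Y n).card * (2 * r + 1) := by rw [Finset.sum_const, smul_eq_mul]
  _ = (2 * r + 1) * (trace Y n).card := mul_comm _ _

/-- Main technical lemma: a coarse equivalence of `XS S` and `XS T` forces the
blocks of `S` to be eventually blocks of `T`. -/
theorem eventual_subset {S T : Set ℕ} (h : NatCoarselyEquiv (XS S) (XS T)) :
    ∃ N, ∀ n, N ≤ n → n ∈ S → n ∈ T := by
  obtain ⟨Y, Y', ⟨hYsub, r, hYd⟩, ⟨hY'sub, r', hY'd⟩, f, hf, hgd⟩ := h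
  obtain ⟨t, ht⟩ := hf (2 * r + 1)
  obtain ⟨t', ht'⟩ := hgd (2 * r' + 1)
  classical
  set g : ℕ → ℕ := fun x => if h : x ∈ Y then ((f ⟨x, h⟩ : Y') : ℕ) else 0 with hgdef
  set g' : ℕ → ℕ := fun x => if h : x ∈ Y' then ((f.symm ⟨x, h⟩ : Y) : ℕ) else 0 with hg'def
  have hgY : ∀ x ∈ Y, g x ∈ Y' := by
    intro x hx
    simp only [hgdef, dif_pos hx]
    exact (f ⟨x, hx⟩).2
  have hg'Y : ∀ x ∈ Y', g' x ∈ Y := by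
    intro x hx
    simp only [hg'def, dif_pos hx]
    exact (f.symm ⟨x, hx⟩).2
  have hg'g : ∀ x ∈ Y, g' (g x) = x := by
    intro x hx
    have h1 : g x ∈ Y' := hgY x hx
    simp only [hg'def, dif_pos h1]
    have h2 : (⟨g x, h1⟩ : Y') = f ⟨x, hx⟩ := Subtype.ext (by simp only [hgdef, dif_pos hx])
    rw [h2, Equiv.symm_apply_apply]
  have hgctrl : ∀ x y, x ∈ Y → y ∈ Y → Nat.dist x y ≤ 2 * r + 1 →
      Nat.dist (g x) (g y) ≤ t := by
    intro x y hx hy hxy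
    simp only [hgdef, dif_pos hx, dif_pos hy]
    exact ht ⟨x, hx⟩ ⟨y, hy⟩ hxy
  have hg'ctrl : ∀ x y, x ∈ Y' → y ∈ Y' → Nat.dist x y ≤ 2 * r' + 1 →
      Nat.dist (g' x) (g' y) ≤ t' := by
    intro x y hx hy hxy
    simp only [hg'def, dif_pos hx, dif_pos hy]
    exact ht' ⟨x, hx⟩ ⟨y, hy⟩ hxy
  refine ⟨2 * r + 2 * t' + (2 * r + 1) * (4 * t) + (2 * r' + 1)
      + (2 * r + 1) * (2 * r + 2 * r' + 2) + 2, ?_⟩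
  intro n hNn hnS
  have hLn : 2 * r + 2 * t' + (2 * r + 1) * (4 * t) + (2 * r' + 1)
      + (2 * r + 1) * (2 * r + 2 * r' + 2) + 2 < L n := lt_of_le_of_lt hNn (lt_L n)
  have hcn : 2 * r + 2 * t' + (2 * r + 1) * (4 * t) + (2 * r' + 1)
      + (2 * r + 1) * (2 * r + 2 * r' + 2) + 2 < c n := lt_of_le_of_lt hNn (lt_c n)
  have hz1 := Nat.zero_le ((2 * r + 1) * (4 * t))
  have hz2 := Nat.zero_le ((2 * r + 1) * (2 * r + 2 * r' + 2))
  have hc2r : 2 * r < c n := by linarith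
  have hc2t' : 2 * t' < c n := by linarith
  have hcardA : L n ≤ (2 * r + 1) * (trace Y n).card := trace_lower hYsub hYd hnS hc2r
  have hchain := chain hYsub hYd (fun x hx => hY'sub (hgY x hx)) hgctrl hnS hc2r
  have hA0 : (trace Y n).Nonempty := by
    rw [← Finset.card_pos]
    rcases Nat.eq_zero_or_pos (trace Y n).card with h0 | h0
    · rw [h0, mul_zero] at hcardA
      have := L_pos n
      omega
    · exact h0
  have hgg' : ∀ x ∈ Y', g (g' x) = x := by
    intro x hx
    have h1 : g' x ∈ Y := hg'Y x hx
    simp only [hgdef, dif_pos h1]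
    have h2 : (⟨g' x, h1⟩ : Y) = f.symm ⟨x, hx⟩ := Subtype.ext (by simp only [hg'def, dif_pos hx])
    rw [h2, Equiv.apply_symm_apply]
  obtain ⟨y₀, hy₀⟩ := hA0
  obtain ⟨hy₀b, hy₀Y⟩ := trace_mem.mp hy₀
  obtain ⟨m, hmT, hbm⟩ := hY'sub (hgY y₀ hy₀Y)
  have hinj : Set.InjOn g ↑(trace Y n) := by
    intro x hx y hy hxy
    rw [Finset.mem_coe] at hx hy
    have hxY := (trace_mem.mp hx).2
    have hyY := (trace_mem.mp hy).2
    calc x = g' (g x) := (hg'g x hxY).symm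
    _ = g' (g y) := by rw [hxy]
    _ = y := hg'g y hyY
  have hcardim : ((trace Y n).image g).card = (trace Y n).card :=
    Finset.card_image_of_injOn hinj
  by_cases hsm : c m ≤ 2 * t
  · exfalso
    have hsub : (trace Y n).image g ⊆ Finset.range (4 * t) := by
      intro u hu
      obtain ⟨z, hz, rfl⟩ := Finset.mem_image.mp hu
      obtain ⟨hzb, hzY⟩ := trace_mem.mp hz
      obtain ⟨k, l, hk, hl, hu1, hu2, hkl⟩ := hchain y₀ z hy₀Y hy₀b hzY hzb
      have hkm : k = m := blk_eq hu1 hbm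
      have hcl : c l ≤ 2 * t := by
        rcases hkl with h' | hs
        · rw [← h', hkm]
          exact hsm
        · exact hs.2
      rw [Finset.mem_range]
      have := blk_ub hu2
      omega
    have hle : (trace Y n).card ≤ 4 * t := by
      rw [← hcardim]
      calc ((trace Y n).image g).card ≤ (Finset.range (4 * t)).card :=
            Finset.card_le_card hsub
      _ = 4 * t := Finset.card_range _
    have h1 : (2 * r + 1) * (trace Y n).card ≤ (2 * r + 1) * (4 * t) :=
      Nat.mul_le_mul_left _ hle
    linarith
  · push_neg at hsm
    have hBsub : (trace Y n).image g ⊆ Finset.Ico (c m) (c m + L m) := by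
      intro u hu
      obtain ⟨z, hz, rfl⟩ := Finset.mem_image.mp hu
      obtain ⟨hzb, hzY⟩ := trace_mem.mp hz
      obtain ⟨k, l, hk, hl, hu1, hu2, hkl⟩ := hchain y₀ z hy₀Y hy₀b hzY hzb
      have hkm : k = m := blk_eq hu1 hbm
      have hlm : l = m := by
        rcases hkl with h' | hs
        · omega
        · exfalso
          rw [hkm] at hs
          omega
      rw [hlm] at hu2
      exact Finset.mem_Ico.mpr ⟨hu2.1, hu2.2⟩
    have hLnm : L n ≤ (2 * r + 1) * L m := by
      have h2 : ((trace Y n).image g).card ≤ L m := by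
        calc ((trace Y n).image g).card ≤ (Finset.Ico (c m) (c m + L m)).card :=
              Finset.card_le_card hBsub
        _ = L m := by rw [Nat.card_Ico]; omega
      rw [hcardim] at h2
      calc L n ≤ (2 * r + 1) * (trace Y n).card := hcardA
      _ ≤ (2 * r + 1) * L m := Nat.mul_le_mul_left _ h2
    have hKm : 2 * r + 2 * r' + 2 ≤ L m := by
      by_contra hc
      push_neg at hc
      have h3 : (2 * r + 1) * L m ≤ (2 * r + 1) * (2 * r + 2 * r' + 2) :=
        Nat.mul_le_mul_left _ (le_of_lt hc)
      linarith
    have hc2r' : 2 * r' < c m := lt_of_lt_of_le (lt_of_lt_of_le (by omega) hKm) (L_le_c m)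
    have hcardA' : L m ≤ (2 * r' + 1) * (trace Y' m).card :=
      trace_lower hY'sub hY'd hmT hc2r'
    have hchain' := chain hY'sub hY'd (fun x hx => hYsub (hg'Y x hx)) hg'ctrl hmT hc2r'
    have hu₀mem : g y₀ ∈ Y' := hgY y₀ hy₀Y
    have hB'sub : (trace Y' m).image g' ⊆ Finset.Ico (c n) (c n + L n) := by
      intro u hu
      obtain ⟨z, hz, rfl⟩ := Finset.mem_image.mp hu
      obtain ⟨hzb, hzY⟩ := trace_mem.mp hz
      have hrel := hchain' (g y₀) z hu₀mem hbm hzY hzb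
      rw [hg'g y₀ hy₀Y] at hrel
      obtain ⟨k, l, hk, hl, hu1, hu2, hkl⟩ := hrel
      have hkn : k = n := blk_eq hu1 hy₀b
      have hln : l = n := by
        rcases hkl with h' | hs
        · omega
        · exfalso
          rw [hkn] at hs
          omega
      rw [hln] at hu2
      exact Finset.mem_Ico.mpr ⟨hu2.1, hu2.2⟩
    have hinj' : Set.InjOn g' ↑(trace Y' m) := by
      intro x hx y hy hxy
      rw [Finset.mem_coe] at hx hy
      have hxY := (trace_mem.mp hx).2
      have hyY := (trace_mem.mp hy).2
      calc x = g (g' x) := (hgg' x hxY).symm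
      _ = g (g' y) := by rw [hxy]
      _ = y := hgg' y hyY
    have hcard' : (trace Y' m).card ≤ L n := by
      rw [← Finset.card_image_of_injOn hinj']
      calc ((trace Y' m).image g').card ≤ (Finset.Ico (c n) (c n + L n)).card :=
            Finset.card_le_card hB'sub
      _ = L n := by rw [Nat.card_Ico]; omega
    have hLmn : L m ≤ (2 * r' + 1) * L n :=
      le_trans hcardA' (Nat.mul_le_mul_left _ hcard')
    have hmn : m = n := by
      rcases lt_trichotomy m n with hlt | heq | hgt
      · exfalso
        have h1 := L_mul_le hlt
        have h2 : L m * L m ≤ L m * (2 * r + 1) := by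
          rw [mul_comm (L m) (2 * r + 1)]
          exact le_trans h1 hLnm
        have h3 : L m ≤ 2 * r + 1 := Nat.le_of_mul_le_mul_left h2 (L_pos m)
        omega
      · exact heq
      · exfalso
        have h1 := L_mul_le hgt
        have h2 : L n * L n ≤ L n * (2 * r' + 1) := by
          rw [mul_comm (L n) (2 * r' + 1)]
          exact le_trans h1 hLmn
        have h3 : L n ≤ 2 * r' + 1 := Nat.le_of_mul_le_mul_left h2 (L_pos n)
        linarith
    rwa [hmn] at hmT


lemma coarse_symm {X X' : Set ℕ} (h : NatCoarselyEquiv X X') : NatCoarselyEquiv X' X := by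
  obtain ⟨Y, Y', hY, hY', f, hf1, hf2⟩ := h
  refine ⟨Y', Y, hY', hY, f.symm, hf2, ?_⟩
  intro r
  obtain ⟨t, ht⟩ := hf1 r
  refine ⟨t, fun x y hxy => ?_⟩
  simpa using ht x y hxy

lemma c_mem_XS {S : Set ℕ} {n : ℕ} : c n ∈ XS S ↔ n ∈ S := by
  constructor
  · rintro ⟨k, hk, hbk⟩
    have hkn : k = n := by
      rcases lt_trichotomy k n with h | h | h
      · exfalso
        have h4 := four_c h
        have h2 := blk_ub hbk
        have := c_pos k
        omega
      · exact h
      · exfalso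
        have := c_mono h
        have := hbk.1
        omega
    rwa [hkn] at hk
  · intro hn
    exact ⟨n, hn, le_refl _, by have := L_pos n; omega⟩

lemma XS_inj {S T : Set ℕ} (h : XS S = XS T) : S = T := by
  ext n
  rw [← c_mem_XS (S := S), ← c_mem_XS (S := T), h]

/-- Encode a set of naturals as a set with infinitely many representatives per element. -/
def enc (a : Set ℕ) : Set ℕ := {x | ∃ n ∈ a, ∃ k, x = Nat.pair n k}

lemma enc_mem_iff {a : Set ℕ} {n k : ℕ} : Nat.pair n k ∈ enc a ↔ n ∈ a := by
  constructor
  · rintro ⟨n', hn', k', hk'⟩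
    obtain ⟨h1, h2⟩ := Nat.pair_eq_pair.mp hk'
    rwa [h1]
  · intro hn
    exact ⟨n, hn, k, rfl⟩

lemma enc_inj {a b : Set ℕ} (h : enc a = enc b) : a = b := by
  ext n
  rw [← enc_mem_iff (a := a) (k := 0), ← enc_mem_iff (a := b) (k := 0), h]

/-- If `n₀ ∈ a \ b` then `XS (enc a)` and `XS (enc b)` are not coarsely equivalent. -/
lemma not_coarse_of_mem_diff {a b : Set ℕ} {n₀ : ℕ} (ha : n₀ ∈ a) (hb : n₀ ∉ b) :
    ¬ NatCoarselyEquiv (XS (enc a)) (XS (enc b)) := by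
  intro h
  obtain ⟨N, hN⟩ := eventual_subset h
  have h1 : Nat.pair n₀ N ∈ enc a := enc_mem_iff.mpr ha
  have h2 : N ≤ Nat.pair n₀ N := Nat.right_le_pair n₀ N
  exact hb (enc_mem_iff.mp (hN _ h2 h1))

end CoarseAux

/-- There are `2^ℵ₀` subsets of `ℕ` that are pairwise non-coarsely-equivalent
with respect to the metric `|x - y|`. -/
theorem nat_continuum_coarse_subsets :
    ∃ 𝔉 : Set (Set ℕ),
      Cardinal.mk 𝔉 = 2 ^ Cardinal.aleph0 ∧
      ∀ A ∈ 𝔉, ∀ B ∈ 𝔉, A ≠ B → ¬ NatCoarselyEquiv A B := by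
  refine ⟨Set.range (fun a : Set ℕ => CoarseAux.XS (CoarseAux.enc a)), ?_, ?_⟩
  · have hinj : Function.Injective (fun a : Set ℕ => CoarseAux.XS (CoarseAux.enc a)) := by
      intro a b hab
      exact CoarseAux.enc_inj (CoarseAux.XS_inj hab)
    rw [Cardinal.mk_range_eq _ hinj, Cardinal.mk_set, Cardinal.mk_nat]
  · rintro A ⟨a, rfl⟩ B ⟨b, rfl⟩ hAB hcoarse
    have hab : a ≠ b := fun h => hAB (by rw [h])
    have hex : ∃ n₀, (n₀ ∈ a ∧ n₀ ∉ b) ∨ (n₀ ∈ b ∧ n₀ ∉ a) := by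
      by_contra hc
      push_neg at hc
      apply hab
      ext n
      have := hc n
      tauto
    obtain ⟨n₀, h⟩ := hex
    rcases h with ⟨h1, h2⟩ | ⟨h1, h2⟩
    · exact CoarseAux.not_coarse_of_mem_diff h1 h2 hcoarse
    · exact CoarseAux.not_coarse_of_mem_diff h1 h2 (CoarseAux.coarse_symm hcoarse)
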